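/- Consider Akerlof's conformist model with two agents: fix real constants a > 0, 0 ≤ d ≤ b, and k, and for i ∈ {1,2} let agent i's payoff on ℝ≥0 × ℝ≥0 be U_i(x_i, x_{-i}) = −d·|x_{-i} − x_i| − a·x_i² + b·x_i + k. Then a pair (x₁, x₂) ∈ ℝ≥0 × ℝ≥0 is an equilibrium (each x_i maximizes U_i(·, x_{-i}) over ℝ≥0) if and only if x₁ = x₂ and x₁ ∈ [(b−d)/(2a), (b+d)/(2a)]. -/

import Mathlib

open Set

private lemma conformist_aux (a b d : ℝ) (ha : 0 < a) (hd0 : 0 ≤ d) (hdb : d ≤ b)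
    (x z : ℝ) (hzero : d * |z - x| = 0)
    (h : ∀ y : ℝ, 0 ≤ y →
      -d * |z - y| - a * y ^ 2 + b * y ≤ -d * |z - x| - a * x ^ 2 + b * x) :
    (b - d) / (2 * a) ≤ x ∧ x ≤ (b + d) / (2 * a) := by
  constructor
  · by_contra hcon
    push_neg at hcon
    set y := (b - d) / (2 * a) with hy
    have hy2 : 2 * a * y = b - d := by rw [hy]; field_simp [ha.ne']
    have hy0 : 0 ≤ y := div_nonneg (by linarith) (by linarith)
    have h' := h y hy0
    have habs : |x - y| = y - x := by rw [abs_of_neg (by linarith)]; ring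
    have t1 : d * |z - y| ≤ d * (y - x) := by
      have := mul_le_mul_of_nonneg_left (abs_sub_le z x y) hd0
      rw [habs] at this
      nlinarith [this]
    have hpos : 0 < a * ((y - x) * (y - x)) :=
      mul_pos ha (mul_pos (by linarith) (by linarith))
    nlinarith [h', t1, hy2, hzero, hpos]
  · by_contra hcon
    push_neg at hcon
    set y := (b + d) / (2 * a) with hy
    have hy2 : 2 * a * y = b + d := by rw [hy]; field_simp [ha.ne']
    have hy0 : 0 ≤ y := div_nonneg (by linarith) (by linarith)
    have h' := h y hy0
    have habs : |x - y| = x - y := abs_of_pos (by linarith)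
    have t1 : d * |z - y| ≤ d * (x - y) := by
      have := mul_le_mul_of_nonneg_left (abs_sub_le z x y) hd0
      rw [habs] at this
      nlinarith [this]
    have hpos : 0 < a * ((x - y) * (x - y)) :=
      mul_pos ha (mul_pos (by linarith) (by linarith))
    nlinarith [h', t1, hy2, hzero, hpos]

theorem conformist_equilibrium_characterization
    (a b d k : ℝ) (ha : 0 < a) (hd0 : 0 ≤ d) (hdb : d ≤ b)
    (x₁ x₂ : ℝ) (h₁ : 0 ≤ x₁) (h₂ : 0 ≤ x₂) :
    ((∀ y : ℝ, 0 ≤ y →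
        -d * |x₂ - y| - a * y ^ 2 + b * y + k ≤
          -d * |x₂ - x₁| - a * x₁ ^ 2 + b * x₁ + k) ∧
     (∀ y : ℝ, 0 ≤ y →
        -d * |x₁ - y| - a * y ^ 2 + b * y + k ≤
          -d * |x₁ - x₂| - a * x₂ ^ 2 + b * x₂ + k))
    ↔ (x₁ = x₂ ∧ x₁ ∈ Icc ((b - d) / (2 * a)) ((b + d) / (2 * a))) := by
  constructor
  · rintro ⟨h1, h2⟩
    have e1 := h1 x₂ h₂
    have e2 := h2 x₁ h₁
    rw [sub_self, abs_zero] at e1 e2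
    have hcomm : |x₁ - x₂| = |x₂ - x₁| := abs_sub_comm _ _
    have key : d * |x₂ - x₁| = 0 := by
      have hle : d * |x₂ - x₁| ≤ 0 := by nlinarith [e1, e2, hcomm]
      exact le_antisymm hle (mul_nonneg hd0 (abs_nonneg _))
    have key' : d * |x₁ - x₂| = 0 := by rw [hcomm]; exact key
    have b1 := conformist_aux a b d ha hd0 hdb x₁ x₂ key
      (fun y hy => by linarith [h1 y hy])
    have b2 := conformist_aux a b d ha hd0 hdb x₂ x₁ key'
      (fun y hy => by linarith [h2 y hy])
    have heq : x₁ = x₂ := by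
      rcases mul_eq_zero.mp key with hd | habs
      · subst hd
        have e1 : x₁ = b / (2 * a) := by
          have := b1; simp only [sub_zero, add_zero] at this
          linarith [this.1, this.2]
        have e2 : x₂ = b / (2 * a) := by
          have := b2; simp only [sub_zero, add_zero] at this
          linarith [this.1, this.2]
        rw [e1, e2]
      · have := abs_eq_zero.mp habs; linarith
    exact ⟨heq, b1.1, b1.2⟩
  · rintro ⟨heq, hlo, hhi⟩
    subst heq
    have hlo' : b - d ≤ 2 * a * x₁ := by
      rw [div_le_iff₀ (by linarith)] at hlo; linarith
    have hhi' : 2 * a * x₁ ≤ b + d := by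
      rw [le_div_iff₀ (by linarith)] at hhi; linarith
    have main : ∀ y : ℝ, 0 ≤ y →
        -d * |x₁ - y| - a * y ^ 2 + b * y + k ≤
          -d * |x₁ - x₁| - a * x₁ ^ 2 + b * x₁ + k := by
      intro y hy
      rw [sub_self, abs_zero]
      rcases le_total y x₁ with hle | hle
      · rw [abs_of_nonneg (by linarith)]
        nlinarith [mul_nonneg (sub_nonneg.2 hle)
          (show (0:ℝ) ≤ b + d - a * (x₁ + y) by nlinarith)]
      · rw [abs_of_nonpos (by linarith)]
        nlinarith [mul_nonneg (sub_nonneg.2 hle)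
          (show (0:ℝ) ≤ a * (x₁ + y) - (b - d) by nlinarith)]
    exact ⟨main, main⟩
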